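/- If T : E → F is an order bounded disjointness-preserving operator whose modulus |T| is u-L-weakly compact, then |T| (and hence T) is u-M-weakly compact: for any disjoint sequence (xₙ) in the unit ball of E, the images |T|xₙ are pairwise disjoint and lie in sol(|T|(U)), hence are un-null. -/

import Mathlib

open Filter

section Aux
variable {α : Type*} [Lattice α] [AddCommGroup α] [CovariantClass α α (· + ·) (· ≤ ·)]

lemma aux_inf_add_le {a b c : α} (ha : 0 ≤ a) (hb : 0 ≤ b) (hc : 0 ≤ c) :
    (a + b) ⊓ c ≤ a ⊓ c + b ⊓ c := by
  have h : a ⊓ c + b ⊓ c = ((a + b) ⊓ (c + b)) ⊓ ((a + c) ⊓ (c + c)) := by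
    rw [add_inf, inf_add, inf_add]
  rw [h]
  refine le_inf (le_inf inf_le_left ?_) (le_inf ?_ ?_)
  · exact inf_le_right.trans (le_add_of_nonneg_right hb)
  · exact inf_le_right.trans (le_add_of_nonneg_left ha)
  · exact inf_le_right.trans (le_add_of_nonneg_left hc)

lemma aux_nsmul_inf {a b : α} (ha : 0 ≤ a) (hb : 0 ≤ b) :
    ∀ n : ℕ, (n • a) ⊓ b ≤ n • (a ⊓ b) := by
  intro n
  induction n with
  | zero => simpa using hb
  | succ n ih =>
      rw [succ_nsmul, succ_nsmul]
      calc (n • a + a) ⊓ b ≤ (n • a) ⊓ b + a ⊓ b :=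
            aux_inf_add_le (nsmul_nonneg ha n) ha hb
        _ ≤ n • (a ⊓ b) + a ⊓ b := add_le_add_left ih _

lemma aux_inf_eq_zero {u v : α} (hu : 0 ≤ u) (hv : 0 ≤ v) (huv : u ⊓ v = 0)
    (n m : ℕ) : (n • u) ⊓ (m • v) = 0 := by
  have h1 : (m • v) ⊓ u ≤ 0 := by
    have := aux_nsmul_inf hv hu m
    rwa [inf_comm v u, huv, smul_zero] at this
  have h2 : (n • u) ⊓ (m • v) ≤ 0 := by
    have := aux_nsmul_inf hu (nsmul_nonneg hv m) n
    refine this.trans ?_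
    rw [inf_comm]
    calc n • ((m • v) ⊓ u) ≤ n • (0 : α) := nsmul_le_nsmul_right h1 n
      _ = 0 := smul_zero n
  exact le_antisymm h2 (le_inf (nsmul_nonneg hu n) (nsmul_nonneg hv m))

lemma aux_abs_sub_of_disjoint {u v : α} (hu : 0 ≤ u) (hv : 0 ≤ v) (huv : u ⊓ v = 0) :
    |u - v| = u + v := by
  have hinf : (u - v) ⊓ (v - u) = -(u + v) := by
    have h : ((u - v) ⊓ (v - u)) + (u + v) = 0 := by
      rw [inf_add]
      have e1 : u - v + (u + v) = 2 • u := by rw [two_nsmul]; abel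
      have e2 : v - u + (u + v) = 2 • v := by rw [two_nsmul]; abel
      rw [e1, e2, aux_inf_eq_zero hu hv huv 2 2]
    exact eq_neg_of_add_eq_zero_left h
  have habs : |u - v| = (u - v) ⊔ (v - u) := by
    rw [abs, neg_sub]
  have hs := inf_add_sup (u - v) (v - u)
  rw [hinf] at hs
  have h0 : -(u + v) + ((u - v) ⊔ (v - u)) = 0 := hs.trans (by abel)
  rw [habs, ← neg_add_eq_zero.mp h0]

lemma aux_abs_nsmul (n : ℕ) (a : α) : |n • a| = n • |a| := by
  have hd : a⁺ ⊓ a⁻ = 0 := posPart_inf_negPart_eq_zero a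
  calc |n • a| = |n • a⁺ - n • a⁻| := by rw [← nsmul_sub, posPart_sub_negPart]
    _ = n • a⁺ + n • a⁻ :=
        aux_abs_sub_of_disjoint (nsmul_nonneg (posPart_nonneg a) n)
          (nsmul_nonneg (negPart_nonneg a) n)
          (aux_inf_eq_zero (posPart_nonneg a) (negPart_nonneg a) hd n n)
    _ = n • (a⁺ + a⁻) := (nsmul_add _ _ n).symm
    _ = n • |a| := by rw [posPart_add_negPart]

end Aux
/-- A sequence in a normed lattice is unbounded norm (un-) convergent to `0`. -/
def UnNullSeq {F : Type*} [NormedAddCommGroup F] [Lattice F] [HasSolidNorm F] [IsOrderedAddMonoid F] (y : ℕ → F) : Prop :=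
  ∀ w : F, 0 ≤ w → Tendsto (fun n => ‖|y n| ⊓ w‖) atTop (nhds 0)

/-- `T` is unbounded M-weakly compact. -/
def UMWeaklyCompact {E F : Type*} [NormedAddCommGroup E] [Lattice E] [HasSolidNorm E] [IsOrderedAddMonoid E] [NormedSpace ℝ E]
    [NormedAddCommGroup F] [Lattice F] [HasSolidNorm F] [IsOrderedAddMonoid F] [NormedSpace ℝ F] (T : E →L[ℝ] F) : Prop :=
  ∀ x : ℕ → E, (∃ C, ∀ n, ‖x n‖ ≤ C) → (∀ n m, n ≠ m → |x n| ⊓ |x m| = 0) →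
    UnNullSeq (fun n => T (x n))

/-- `T` is unbounded L-weakly compact. -/
def ULWeaklyCompact {E F : Type*} [NormedAddCommGroup E] [Lattice E] [HasSolidNorm E] [IsOrderedAddMonoid E] [NormedSpace ℝ E]
    [NormedAddCommGroup F] [Lattice F] [HasSolidNorm F] [IsOrderedAddMonoid F] [NormedSpace ℝ F] (T : E →L[ℝ] F) : Prop :=
  ∀ y : ℕ → F, (∀ n, ∃ u : E, ‖u‖ ≤ 1 ∧ |y n| ≤ |T u|) →
    (∀ n m, n ≠ m → |y n| ⊓ |y m| = 0) → UnNullSeq y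

/-- if `T` is order bounded and disjointness-preserving, with
modulus `R = |T|` (a lattice homomorphism satisfying `|R x| = |T x|`), and `R`
is u-L-weakly compact, then both `R` and `T` are u-M-weakly compact. -/
theorem uMWeaklyCompact_of_modulus_uLWeaklyCompact
    {E F : Type*} [NormedAddCommGroup E] [Lattice E] [HasSolidNorm E] [IsOrderedAddMonoid E] [NormedSpace ℝ E] [CompleteSpace E]
    [NormedAddCommGroup F] [Lattice F] [HasSolidNorm F] [IsOrderedAddMonoid F] [NormedSpace ℝ F] [CompleteSpace F]
    (T R : E →L[ℝ] F)
    (hdisj : ∀ x y : E, |x| ⊓ |y| = 0 → |T x| ⊓ |T y| = 0)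
    (hRhom : ∀ x y : E, R (x ⊔ y) = R x ⊔ R y)
    (hmod : ∀ x : E, |R x| = |T x|)
    (hRL : ULWeaklyCompact R) :
    UMWeaklyCompact R ∧ UMWeaklyCompact T := by
  have key : UMWeaklyCompact R := by
    intro x hbd hx
    obtain ⟨C, hC⟩ := hbd
    obtain ⟨N, hN1, hNC⟩ : ∃ N : ℕ, 1 ≤ N ∧ C ≤ (N : ℝ) :=
      ⟨max 1 ⌈C⌉₊, le_max_left _ _,
        (Nat.le_ceil C).trans (by exact_mod_cast le_max_right 1 ⌈C⌉₊)⟩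
    have hNpos : (0 : ℝ) < N := by exact_mod_cast hN1
    set z : ℕ → E := fun n => ((N : ℝ))⁻¹ • x n with hz
    have hxz : ∀ n, x n = N • z n := by
      intro n
      rw [hz, ← Nat.cast_smul_eq_nsmul ℝ, smul_smul, mul_inv_cancel₀ hNpos.ne', one_smul]
    have habsR : ∀ v : E, |R v| = R |v| := by
      intro v
      rw [abs, abs, hRhom, map_neg]
    have hTdisj : ∀ n m, n ≠ m → |R (x n)| ⊓ |R (x m)| = 0 := by
      intro n m h
      rw [hmod, hmod]
      exact hdisj _ _ (hx n m h)
    have hkey : ∀ n, |R (x n)| = N • |R (z n)| := by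
      intro n
      rw [hxz n, map_nsmul, aux_abs_nsmul]
    have hz_disj : ∀ n m, n ≠ m → |R (z n)| ⊓ |R (z m)| = 0 := by
      intro n m h
      have h0 := hTdisj n m h
      rw [hkey n, hkey m] at h0
      have hnn : (0 : F) ≤ |R (z n)| ⊓ |R (z m)| := le_inf (abs_nonneg _) (abs_nonneg _)
      refine le_antisymm ?_ hnn
      have hle : |R (z n)| ⊓ |R (z m)| ≤ N • (|R (z n)| ⊓ |R (z m)|) := by
        calc |R (z n)| ⊓ |R (z m)| = 1 • (|R (z n)| ⊓ |R (z m)|) := (one_nsmul _).symm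
          _ ≤ N • (|R (z n)| ⊓ |R (z m)|) := nsmul_le_nsmul_left hnn hN1
      refine hle.trans ?_
      calc N • (|R (z n)| ⊓ |R (z m)|) ≤ (N • |R (z n)|) ⊓ (N • |R (z m)|) :=
            le_inf (nsmul_le_nsmul_right inf_le_left N) (nsmul_le_nsmul_right inf_le_right N)
        _ = 0 := h0
    have hznorm : ∀ n, ‖z n‖ ≤ 1 := by
      intro n
      rw [hz]
      simp only [norm_smul, Real.norm_eq_abs, abs_inv, Nat.abs_cast]
      calc ((N : ℝ))⁻¹ * ‖x n‖ ≤ ((N : ℝ))⁻¹ * N :=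
            mul_le_mul_of_nonneg_left ((hC n).trans hNC) (inv_nonneg.mpr hNpos.le)
        _ = 1 := inv_mul_cancel₀ hNpos.ne'
    have hUn : UnNullSeq (fun n => R (z n)) :=
      hRL _ (fun n => ⟨z n, hznorm n, le_refl _⟩) hz_disj
    intro w hw
    refine squeeze_zero (fun n => norm_nonneg _) (fun n => ?_)
      (g := fun n => (N : ℝ) * ‖|R (z n)| ⊓ w‖)
      (by simpa using (hUn w hw).const_mul (N : ℝ))
    have h1 : (0 : F) ≤ |R (x n)| ⊓ w := le_inf (abs_nonneg _) hw
    have h2 : |R (x n)| ⊓ w ≤ N • (|R (z n)| ⊓ w) := by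
      rw [hkey n]
      exact aux_nsmul_inf (abs_nonneg _) hw N
    have h3 : ‖|R (x n)| ⊓ w‖ ≤ ‖N • (|R (z n)| ⊓ w)‖ := by
      refine HasSolidNorm.solid ?_
      rw [abs_of_nonneg h1, abs_of_nonneg (h1.trans h2)]
      exact h2
    exact h3.trans norm_nsmul_le
  refine ⟨key, ?_⟩
  intro x hbd hx w hw
  have h := key x hbd hx w hw
  simpa only [hmod] using h
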